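/- Let G be a finite group and K = x^G a conjugacy class such that K^n = {1} ∪ D for some n ≥ 2 and some conjugacy class D. Then KK⁻¹ = {1} ∪ D. -/

import Mathlib

open Pointwise

/-- The conjugacy class of `a` in `G`. -/
def conjClass (G : Type*) [Group G] (a : G) : Set G := {b | IsConj a b}

section Aux
variable {G : Type*} [Group G]

/-- A set is conjugation invariant. -/
def ConjInvSet (S : Set G) : Prop := ∀ g a : G, a ∈ S → g * a * g⁻¹ ∈ S

lemma conjInv_conjClass (x : G) : ConjInvSet (conjClass G x) := by
  intro g a ha
  exact ha.trans (isConj_iff.mpr ⟨g, rfl⟩)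

lemma conjInv_one : ConjInvSet ({1} : Set G) := by
  intro g a ha
  simp_all

lemma conjInv_mul {S T : Set G} (hS : ConjInvSet S) (hT : ConjInvSet T) :
    ConjInvSet (S * T) := by
  rintro g a ⟨s, hs, t, ht, rfl⟩
  exact ⟨g * s * g⁻¹, hS g s hs, g * t * g⁻¹, hT g t ht, by group⟩

lemma conjInv_pow {S : Set G} (hS : ConjInvSet S) (n : ℕ) : ConjInvSet (S ^ n) := by
  induction n with
  | zero => rw [pow_zero, ← Set.singleton_one]; exact conjInv_one
  | succ k ih => rw [pow_succ]; exact conjInv_mul ih hS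

lemma conjClass_subset {S : Set G} (hS : ConjInvSet S) {a : G} (ha : a ∈ S) :
    conjClass G a ⊆ S := by
  intro b hb
  obtain ⟨c, hc⟩ := isConj_iff.mp hb
  rw [← hc]
  exact hS c a ha

end Aux

theorem stmt16 {G : Type*} [Group G] [Fintype G] (x d : G) (n : ℕ) (hn : 2 ≤ n)
    (h : (conjClass G x) ^ n = {1} ∪ conjClass G d) :
    conjClass G x * (conjClass G x)⁻¹ = {1} ∪ conjClass G d := by
  set K := conjClass G x with hK
  have hxK : x ∈ K := IsConj.refl x
  have hone : (1 : G) ∈ K ^ n := by rw [h]; exact Or.inl rfl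
  obtain ⟨m, rfl⟩ : ∃ m, n = m + 1 := ⟨n - 1, by omega⟩
  -- from 1 ∈ K^(m+1), get K⁻¹ ⊆ K^m
  rw [pow_succ] at hone
  obtain ⟨p, hp, k, hk, hpk⟩ := hone
  have hKinv : K⁻¹ ⊆ K ^ m := by
    intro y hy
    have hy' : IsConj x y⁻¹ := Set.mem_inv.mp hy
    have hky : IsConj p y := by
      have hp_eq : p = k⁻¹ := by
        have : p * k = 1 := hpk
        exact eq_inv_of_mul_eq_one_left this
      subst hp_eq
      have h1 : IsConj k y⁻¹ := hk.symm.trans hy'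
      obtain ⟨c, hc⟩ := isConj_iff.mp h1
      refine isConj_iff.mpr ⟨c, ?_⟩
      have : (c * k * c⁻¹)⁻¹ = (y⁻¹)⁻¹ := by rw [hc]
      simpa [mul_assoc] using this
    have : conjClass G p ⊆ K ^ m :=
      conjClass_subset (conjInv_pow (conjInv_conjClass x) m) hp
    exact this hky
  have hfwd : K * K⁻¹ ⊆ {1} ∪ conjClass G d := by
    rw [← h, pow_succ']
    exact Set.mul_subset_mul_left hKinv
  have honeKK : (1 : G) ∈ K * K⁻¹ :=
    ⟨x, hxK, x⁻¹, Set.inv_mem_inv.mpr hxK, mul_inv_cancel x⟩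
  have hKKinv : ConjInvSet (K * K⁻¹) := by
    apply conjInv_mul (conjInv_conjClass x)
    intro g a ha
    have := conjInv_conjClass x g a⁻¹ (Set.mem_inv.mp ha)
    rw [Set.mem_inv]
    simpa [mul_assoc] using this
  by_cases hcase : ∃ a ∈ K * K⁻¹, a ≠ 1
  · obtain ⟨a, haKK, hane⟩ := hcase
    have haD : a ∈ conjClass G d := by
      rcases hfwd haKK with h1 | h2
      · exact absurd h1 hane
      · exact h2
    apply Set.Subset.antisymm hfwd
    rintro b (hb | hb)
    · rw [Set.mem_singleton_iff] at hb; subst hb; exact honeKK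
    · -- b ∈ conjClass G d, so IsConj d b; also IsConj d a; so IsConj a b
      have : IsConj a b := (haD : IsConj d a).symm.trans hb
      have hsub : conjClass G a ⊆ K * K⁻¹ := conjClass_subset hKKinv haKK
      exact hsub this
  · push_neg at hcase
    -- K * K⁻¹ = {1}
    have hKK1 : K * K⁻¹ = {1} := by
      apply Set.Subset.antisymm
      · intro a ha; exact hcase a ha
      · intro a ha; rw [Set.mem_singleton_iff] at ha; subst ha; exact honeKK
    -- K = {x}
    have hKx : K = {x} := by
      apply Set.Subset.antisymm
      · intro y hy
        have : x * y⁻¹ ∈ K * K⁻¹ := ⟨x, hxK, y⁻¹, Set.inv_mem_inv.mpr hy, rfl⟩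
        rw [hKK1, Set.mem_singleton_iff] at this
        have hxy : x * y⁻¹ = 1 := this
        have : x = y := by
          have := mul_inv_eq_one.mp hxy
          exact this
        simp [← this]
      · intro y hy; rw [Set.mem_singleton_iff] at hy; subst hy; exact hxK
    have hpow : K ^ (m + 1) = {x ^ (m + 1)} := by
      rw [hKx, Set.singleton_pow]
    rw [hpow] at h
    have hx1 : x ^ (m + 1) = 1 := by
      have : (1 : G) ∈ ({x ^ (m + 1)} : Set G) := by rw [h]; exact Or.inl rfl
      rw [Set.mem_singleton_iff] at this; exact this.symm
    have hd1 : d = 1 := by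
      have hdD : d ∈ conjClass G d := IsConj.refl d
      have : d ∈ ({x ^ (m + 1)} : Set G) := by rw [h]; exact Or.inr hdD
      rw [Set.mem_singleton_iff, hx1] at this; exact this
    have hD1 : conjClass G d = {1} := by
      subst hd1
      ext b
      simp [conjClass, isConj_iff_eq, eq_comm]
    rw [hKK1, hD1, Set.union_self]
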